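/- Let (X,d) be a complete separable metric space and m a nonnegative Borel measure on X, finite on bounded sets. Let f ∈ L²(X,m), g ∈ L²(X,m), and suppose there is a sequence f_n ∈ Lip_bs(X) with f_n → f in L²(X,m) and lip(f_n) → g weakly in L²(X,m). Then f² ∈ BV(X,d,m) and |D(f²)|(X) ≤ 2 ∫_X |f| g dm. -/

import Mathlib

open MeasureTheory Filter Topology ENNReal

/-- The slope (pointwise Lipschitz constant) of `f` at `x`, with the convention that it is `0`
at isolated points. -/
noncomputable def lipSlope {X : Type*} [MetricSpace X] (f : X → ℝ) (x : X) : ℝ :=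
  Filter.limsup (fun y => |f y - f x| / dist y x) (𝓝[≠] x)

/-- Lipschitz functions with bounded support. -/
def LipBS {X : Type*} [MetricSpace X] (f : X → ℝ) : Prop :=
  (∃ K : NNReal, LipschitzWith K f) ∧ Bornology.IsBounded (Function.support f)

/-- Functions which are Lipschitz on bounded sets. -/
def LipLoc {X : Type*} [MetricSpace X] (f : X → ℝ) : Prop :=
  ∀ s : Set X, Bornology.IsBounded s → ∃ K : NNReal, LipschitzOnWith K f s

/-- `u ∈ BV(X,d,m)`. -/
def MemBV {X : Type*} [MetricSpace X] [MeasurableSpace X]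
    (m : Measure X) (u : X → ℝ) : Prop :=
  Integrable u m ∧ ∃ g : ℕ → X → ℝ, (∀ n, LipLoc (g n)) ∧
    Tendsto (fun n => ∫⁻ x, ENNReal.ofReal |g n x - u x| ∂m) atTop (𝓝 0) ∧
    Filter.limsup (fun n => ∫⁻ x, ENNReal.ofReal (lipSlope (g n) x) ∂m) atTop < ⊤

/-- The total variation `|Du|(X)` of a function `u`. -/
noncomputable def totalVar {X : Type*} [MetricSpace X] [MeasurableSpace X]
    (m : Measure X) (u : X → ℝ) : ℝ≥0∞ :=
  sInf { p : ℝ≥0∞ | ∃ g : ℕ → X → ℝ, (∀ n, LipLoc (g n)) ∧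
    Tendsto (fun n => ∫⁻ x, ENNReal.ofReal |g n x - u x| ∂m) atTop (𝓝 0) ∧
    p = Filter.liminf (fun n => ∫⁻ x, ENNReal.ofReal (lipSlope (g n) x) ∂m) atTop }

section SlopeLemmas
variable {X : Type*} [MetricSpace X]

lemma lipSlope_def (f : X → ℝ) (x : X) :
    lipSlope f x = sInf {a : ℝ | ∀ᶠ y in 𝓝[≠] x, |f y - f x| / dist y x ≤ a} :=
  Filter.limsup_eq

lemma quot_nonneg (f : X → ℝ) (x y : X) : 0 ≤ |f y - f x| / dist y x :=
  div_nonneg (abs_nonneg _) dist_nonneg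

lemma mem_nonneg {f : X → ℝ} {x : X} [NeBot (𝓝[≠] x)] {a : ℝ}
    (ha : ∀ᶠ y in 𝓝[≠] x, |f y - f x| / dist y x ≤ a) : 0 ≤ a := by
  obtain ⟨y, hy⟩ := ha.exists
  exact le_trans (quot_nonneg f x y) hy

lemma lipSlope_of_bot {f : X → ℝ} {x : X} (h : 𝓝[≠] x = ⊥) : lipSlope f x = 0 := by
  rw [lipSlope_def, h]
  have h2 : {a : ℝ | ∀ᶠ y in (⊥ : Filter X), |f y - f x| / dist y x ≤ a} = Set.univ := by
    ext a; simp
  rw [h2]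
  refine Real.sInf_of_not_bddBelow ?_
  rintro ⟨b, hb⟩
  have := hb (Set.mem_univ (b - 1))
  linarith

lemma lipSlope_nonneg (f : X → ℝ) (x : X) : 0 ≤ lipSlope f x := by
  rcases (𝓝[≠] x).eq_or_neBot with h | h
  · rw [lipSlope_of_bot h]
  · rw [lipSlope_def]
    rcases Set.eq_empty_or_nonempty
        {a : ℝ | ∀ᶠ y in 𝓝[≠] x, |f y - f x| / dist y x ≤ a} with he | hne
    · rw [he, Real.sInf_empty]
    · exact le_csInf hne fun a ha => mem_nonneg ha

lemma lipSlope_le_of_eventually {f : X → ℝ} {x : X} [NeBot (𝓝[≠] x)] {a : ℝ}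
    (h : ∀ᶠ y in 𝓝[≠] x, |f y - f x| / dist y x ≤ a) : lipSlope f x ≤ a := by
  rw [lipSlope_def]
  exact csInf_le ⟨0, fun b hb => mem_nonneg hb⟩ h

lemma quot_le_of_lipschitz {K : NNReal} {f : X → ℝ} (hf : LipschitzWith K f) {x y : X}
    (hxy : y ≠ x) : |f y - f x| / dist y x ≤ K := by
  rw [div_le_iff₀ (dist_pos.2 hxy)]
  simpa [Real.dist_eq] using hf.dist_le_mul y x

lemma lipSlope_le_lipschitz {K : NNReal} {f : X → ℝ} (hf : LipschitzWith K f) (x : X) :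
    lipSlope f x ≤ K := by
  rcases (𝓝[≠] x).eq_or_neBot with h | h
  · rw [lipSlope_of_bot h]; exact K.coe_nonneg
  · refine lipSlope_le_of_eventually ?_
    filter_upwards [eventually_mem_nhdsWithin] with y hy
    exact quot_le_of_lipschitz hf hy

lemma lipSlope_eq_zero_of_not_mem_closure {f : X → ℝ} {x : X}
    (h : x ∉ closure (Function.support f)) : lipSlope f x = 0 := by
  refine le_antisymm ?_ (lipSlope_nonneg f x)
  rcases (𝓝[≠] x).eq_or_neBot with hb | hb
  · rw [lipSlope_of_bot hb]
  · have hopen : IsOpen (closure (Function.support f))ᶜ := isClosed_closure.isOpen_compl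
    have hx : (closure (Function.support f))ᶜ ∈ 𝓝 x := hopen.mem_nhds h
    refine lipSlope_le_of_eventually ?_
    filter_upwards [nhdsWithin_le_nhds hx] with y hy
    have hfy : f y = 0 := Function.notMem_support.1 fun hs => hy (subset_closure hs)
    have hfx : f x = 0 := Function.notMem_support.1 fun hs => h (subset_closure hs)
    simp [hfy, hfx]

lemma lipSlope_sq_le {K : NNReal} {f : X → ℝ} (hf : LipschitzWith K f) (x : X) :
    lipSlope (fun y => f y ^ 2) x ≤ 2 * |f x| * lipSlope f x := by
  rcases (𝓝[≠] x).eq_or_neBot with hb | hb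
  · rw [lipSlope_of_bot hb]
    have := lipSlope_nonneg f x
    positivity
  · set L := lipSlope f x with hLdef
    have hL0 : 0 ≤ L := lipSlope_nonneg f x
    have key : ∀ δ : ℝ, 0 < δ →
        lipSlope (fun y => f y ^ 2) x ≤ (2 * |f x| + δ) * (L + δ) := by
      intro δ hδ
      have hSne : {a : ℝ | ∀ᶠ y in 𝓝[≠] x, |f y - f x| / dist y x ≤ a}.Nonempty := by
        refine ⟨K, ?_⟩
        filter_upwards [eventually_mem_nhdsWithin] with y hy
        exact quot_le_of_lipschitz hf hy
      have hlt : sInf {a : ℝ | ∀ᶠ y in 𝓝[≠] x, |f y - f x| / dist y x ≤ a} < L + δ := by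
        rw [← lipSlope_def]; linarith
      obtain ⟨a, haS, halt⟩ := exists_lt_of_csInf_lt hSne hlt
      have hcont : Tendsto f (𝓝[≠] x) (𝓝 (f x)) :=
        (hf.continuous.tendsto x).mono_left nhdsWithin_le_nhds
      have hev2 : ∀ᶠ y in 𝓝[≠] x, |f y + f x| < 2 * |f x| + δ := by
        have ht : Tendsto (fun y => |f y + f x|) (𝓝[≠] x) (𝓝 |f x + f x|) :=
          (hcont.add tendsto_const_nhds).abs
        refine ht.eventually_lt_const ?_
        have : |f x + f x| = 2 * |f x| := by rw [← two_mul, abs_mul, abs_two]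
        linarith
      refine lipSlope_le_of_eventually ?_
      filter_upwards [haS, hev2] with y h1 h2
      have heq : |f y ^ 2 - f x ^ 2| / dist y x
          = |f y + f x| * (|f y - f x| / dist y x) := by
        rw [show f y ^ 2 - f x ^ 2 = (f y + f x) * (f y - f x) by ring, abs_mul,
          mul_div_assoc]
      rw [heq]
      have hq : |f y - f x| / dist y x ≤ L + δ := le_trans h1 halt.le
      exact mul_le_mul h2.le hq (quot_nonneg f x y) (by positivity)
    have main : ∀ ε : ℝ, 0 < ε → lipSlope (fun y => f y ^ 2) x ≤ 2 * |f x| * L + ε := by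
      intro ε hε
      have hBpos : (0:ℝ) < L + 2 * |f x| + 1 := by positivity
      obtain ⟨δ, hδ0, hδ1, hδ2⟩ : ∃ δ : ℝ, 0 < δ ∧ δ ≤ 1 ∧ δ * (L + 2 * |f x| + 1) ≤ ε := by
        refine ⟨min 1 (ε / (L + 2 * |f x| + 1)), lt_min one_pos (by positivity),
          min_le_left _ _, ?_⟩
        calc min 1 (ε / (L + 2 * |f x| + 1)) * (L + 2 * |f x| + 1)
            ≤ ε / (L + 2 * |f x| + 1) * (L + 2 * |f x| + 1) :=
              mul_le_mul_of_nonneg_right (min_le_right _ _) hBpos.le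
          _ = ε := div_mul_cancel₀ ε hBpos.ne'
      nlinarith [key δ hδ0, hδ2, mul_le_of_le_one_right hδ0.le hδ1]
    by_contra hcon
    push_neg at hcon
    have := main ((lipSlope (fun y => f y ^ 2) x - 2 * |f x| * L) / 2) (by linarith)
    linarith

end SlopeLemmas

section Meas
variable {X : Type*} [MetricSpace X]

lemma measurable_lipSlope [TopologicalSpace.SeparableSpace X] [MeasurableSpace X] [BorelSpace X]
    {K : NNReal} {f : X → ℝ} (hf : LipschitzWith K f) : Measurable (lipSlope f) := by
  classical
  rcases isEmpty_or_nonempty X with hX | hX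
  · exact Subsingleton.measurable
  obtain ⟨D, hDc, hDd⟩ := TopologicalSpace.exists_countable_dense X
  obtain ⟨e, he⟩ := hDc.exists_eq_range hDd.nonempty
  have hdense : DenseRange e := by rw [DenseRange, ← he]; exact hDd
  set q : ℕ → ℕ → X → ℝ := fun k i x =>
    if e i ≠ x ∧ dist (e i) x < ((k : ℝ) + 1)⁻¹ then |f (e i) - f x| / dist (e i) x else 0
    with hq
  set T : ℕ → X → ℝ := fun k x => ⨆ i, q k i x with hT
  have hq0 : ∀ k i x, 0 ≤ q k i x := by
    intro k i x
    simp only [hq]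
    split
    · exact quot_nonneg f x (e i)
    · exact le_refl 0
  have hqK : ∀ k i x, q k i x ≤ K := by
    intro k i x
    simp only [hq]
    split
    · next h => exact quot_le_of_lipschitz hf h.1
    · exact K.coe_nonneg
  have hbdd : ∀ k x, BddAbove (Set.range fun i => q k i x) := fun k x =>
    ⟨K, by rintro t ⟨i, rfl⟩; exact hqK k i x⟩
  have hT0 : ∀ k x, 0 ≤ T k x := fun k x => le_trans (hq0 k 0 x) (le_ciSup (hbdd k x) 0)
  have hrpos : ∀ k : ℕ, (0:ℝ) < ((k:ℝ) + 1)⁻¹ := fun k => by positivity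
  have hmain : ∀ x, lipSlope f x = ⨅ k, T k x := by
    intro x
    have hbddT : BddBelow (Set.range fun k => T k x) :=
      ⟨0, by rintro t ⟨k, rfl⟩; exact hT0 k x⟩
    rcases (𝓝[≠] x).eq_or_neBot with hb | hb
    · rw [lipSlope_of_bot hb]
      have hbot : (∅ : Set X) ∈ 𝓝[≠] x := by rw [hb]; exact mem_bot
      rw [mem_nhdsWithin] at hbot
      obtain ⟨u, huo, hxu, husub⟩ := hbot
      obtain ⟨r, hr0, hball⟩ := Metric.isOpen_iff.1 huo x hxu
      obtain ⟨k, hk⟩ := exists_nat_one_div_lt hr0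
      have hTk : T k x = 0 := by
        have hzero : ∀ i, q k i x = 0 := by
          intro i
          simp only [hq]
          split
          · next h =>
            exfalso
            have hmem : e i ∈ Metric.ball x r := by
              rw [Metric.mem_ball]
              calc dist (e i) x < ((k:ℝ) + 1)⁻¹ := h.2
                _ = 1 / ((k:ℝ) + 1) := (one_div _).symm
                _ < r := hk
            have : e i ∈ u ∩ {x}ᶜ → e i ∈ (∅ : Set X) := fun hh => husub hh
            exact this ⟨hball hmem, h.1⟩
          · rfl
        simp only [hT]
        rw [show (fun i => q k i x) = fun _ => (0:ℝ) from funext hzero]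
        exact ciSup_const
      refine le_antisymm (le_ciInf fun k' => hT0 k' x) ?_
      rw [← hTk]
      exact ciInf_le hbddT k
    · refine le_antisymm (le_ciInf fun k => ?_) ?_
      · refine lipSlope_le_of_eventually ?_
        have hball : Metric.ball x (((k:ℝ) + 1)⁻¹) ∈ 𝓝 x := Metric.ball_mem_nhds x (hrpos k)
        filter_upwards [nhdsWithin_le_nhds hball, eventually_mem_nhdsWithin] with y hyb hyne
        by_contra hgt
        push_neg at hgt
        have hyx : y ≠ x := hyne
        have hd0 : (0:ℝ) < dist y x := dist_pos.2 hyx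
        have hφ : ContinuousAt (fun z => |f z - f x| / dist z x) y := by
          refine ContinuousAt.div ?_ ?_ hd0.ne'
          · exact ((hf.continuous.sub continuous_const).abs).continuousAt
          · exact (continuous_id.dist continuous_const).continuousAt
        have hev1 : ∀ᶠ z in 𝓝 y, T k x < |f z - f x| / dist z x :=
          hφ.eventually_const_lt hgt
        have hVopen : IsOpen {z : X | z ≠ x ∧ dist z x < ((k:ℝ) + 1)⁻¹} := by
          refine IsOpen.inter isOpen_ne ?_
          exact isOpen_lt (continuous_id.dist continuous_const) continuous_const
        have hev2 : ∀ᶠ z in 𝓝 y, z ≠ x ∧ dist z x < ((k:ℝ) + 1)⁻¹ :=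
          eventually_of_mem (hVopen.mem_nhds ⟨hyx, Metric.mem_ball.1 hyb⟩) fun z hz => hz
        have hev := hev1.and hev2
        have hyint : y ∈ interior {z : X | T k x < |f z - f x| / dist z x ∧
            z ≠ x ∧ dist z x < ((k:ℝ) + 1)⁻¹} := by
          rw [mem_interior_iff_mem_nhds]
          exact hev
        obtain ⟨i, hi⟩ := hdense.exists_mem_open isOpen_interior ⟨y, hyint⟩
        have hi' := interior_subset hi
        have hqi : q k i x = |f (e i) - f x| / dist (e i) x := by
          simp only [hq]
          rw [if_pos ⟨hi'.2.1, hi'.2.2⟩]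
        have hle : q k i x ≤ T k x := le_ciSup (hbdd k x) i
        rw [hqi] at hle
        exact absurd hle (not_le.2 hi'.1)
      · rw [lipSlope_def]
        refine le_csInf ⟨K, ?_⟩ fun a ha => ?_
        · filter_upwards [eventually_mem_nhdsWithin] with y hy
          exact quot_le_of_lipschitz hf hy
        · simp only [Set.mem_setOf_eq] at ha
          have ha0 : 0 ≤ a := mem_nonneg ha
          rw [eventually_nhdsWithin_iff, Metric.eventually_nhds_iff] at ha
          obtain ⟨r, hr0, hr⟩ := ha
          obtain ⟨k, hk⟩ := exists_nat_one_div_lt hr0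
          refine le_trans (ciInf_le hbddT k) (ciSup_le fun i => ?_)
          simp only [hq]
          split
          · next h =>
            refine hr ?_ h.1
            calc dist (e i) x < ((k:ℝ) + 1)⁻¹ := h.2
              _ = 1 / ((k:ℝ) + 1) := (one_div _).symm
              _ < r := hk
          · exact ha0
  have hqm : ∀ k i, Measurable fun x => q k i x := by
    intro k i
    simp only [hq]
    refine Measurable.ite ?_ ?_ measurable_const
    · have h1 : IsOpen {x : X | e i ≠ x} := by
        have h2 : {x : X | e i ≠ x} = {x : X | x ≠ e i} := by
          ext z
          exact ne_comm
        rw [h2]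
        exact isOpen_ne
      have hopen : IsOpen {x : X | e i ≠ x ∧ dist (e i) x < ((k:ℝ) + 1)⁻¹} :=
        h1.inter (isOpen_lt (continuous_const.dist continuous_id) continuous_const)
      exact hopen.measurableSet
    · exact ((continuous_const.sub hf.continuous).abs.measurable).div
        (continuous_const.dist continuous_id).measurable
  have hmeas : Measurable fun x => ⨅ k, T k x :=
    Measurable.iInf fun k => Measurable.iSup fun i => hqm k i
  have : lipSlope f = fun x => ⨅ k, T k x := funext hmain
  rw [this]
  exact hmeas

end Meas


section Helpers
variable {X : Type*} [MetricSpace X]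

lemma memLp_two_of_bounded_support [MeasurableSpace X] [BorelSpace X] {m : Measure X}
    (hbdd : ∀ s : Set X, Bornology.IsBounded s → m s < ⊤)
    {u : X → ℝ} (hu : AEStronglyMeasurable u m) {C : ℝ} (hC : 0 ≤ C)
    {s : Set X} (hs : Bornology.IsBounded s) (hsm : MeasurableSet s)
    (hbound : ∀ x, |u x| ≤ C) (hzero : ∀ x ∉ s, u x = 0) : MemLp u 2 m := by
  have hind : MemLp (s.indicator fun _ => C) 2 m :=
    memLp_indicator_const 2 hsm C (Or.inr (hbdd s hs).ne)
  refine hind.of_le hu ?_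
  refine Filter.Eventually.of_forall fun x => ?_
  by_cases hx : x ∈ s
  · rw [Set.indicator_of_mem hx]
    simp only [Real.norm_eq_abs]
    rw [abs_of_nonneg hC]
    exact hbound x
  · rw [Set.indicator_of_notMem hx, hzero x hx]

lemma bounded_of_lipBS {f : X → ℝ} (h : LipBS f) : ∃ M : ℝ, 0 ≤ M ∧ ∀ x, |f x| ≤ M := by
  obtain ⟨⟨K, hK⟩, hsupp⟩ := h
  rcases Set.eq_empty_or_nonempty (Function.support f) with he | ⟨x₀, hx₀⟩
  · exact ⟨0, le_refl 0, fun x => by simp [Function.support_eq_empty_iff.1 he]⟩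
  · refine ⟨|f x₀| + K * Metric.diam (Function.support f),
      by positivity, fun x => ?_⟩
    by_cases hx : f x = 0
    · rw [hx, abs_zero]
      positivity
    · have hxs : x ∈ Function.support f := hx
      have h1 : |f x| ≤ |f x₀| + |f x - f x₀| := by
        calc |f x| = |f x₀ + (f x - f x₀)| := by ring_nf
          _ ≤ |f x₀| + |f x - f x₀| := abs_add_le _ _
      have h2 : |f x - f x₀| ≤ K * dist x x₀ := by
        simpa [Real.dist_eq] using hK.dist_le_mul x x₀
      have h3 : dist x x₀ ≤ Metric.diam (Function.support f) :=
        Metric.dist_le_diam_of_mem hsupp hxs hx₀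
      have h4 : (K : ℝ) * dist x x₀ ≤ K * Metric.diam (Function.support f) :=
        mul_le_mul_of_nonneg_left h3 K.coe_nonneg
      linarith

lemma integrable_mul_of_memLp_two {α : Type*} [MeasurableSpace α] {m : Measure α} {u v : α → ℝ}
    (hu : MemLp u 2 m) (hv : MemLp v 2 m) : Integrable (fun x => u x * v x) m := by
  have h : (fun x => u x * v x) = fun x => ((u x + v x) ^ 2 - u x ^ 2 - v x ^ 2) / 2 := by
    ext x; ring
  rw [h]
  exact (((hu.add hv).integrable_sq.sub hu.integrable_sq).sub hv.integrable_sq).div_const 2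

lemma eLpNorm_two_eq {α : Type*} [MeasurableSpace α] (m : Measure α) (v : α → ℝ) :
    eLpNorm v 2 m = (∫⁻ x, ENNReal.ofReal (|v x| ^ 2) ∂m) ^ (1/2 : ℝ) := by
  rw [eLpNorm_eq_lintegral_rpow_enorm_toReal two_ne_zero (ENNReal.ofNat_ne_top)]
  have htr : (2 : ℝ≥0∞).toReal = (2 : ℝ) := by simp
  rw [htr]
  congr 1
  refine lintegral_congr fun x => ?_
  rw [Real.enorm_eq_ofReal_abs,
    ENNReal.ofReal_rpow_of_nonneg (abs_nonneg _) (by norm_num : (0:ℝ) ≤ 2)]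
  congr 1
  rw [show ((2:ℝ)) = ((2:ℕ) : ℝ) by norm_num, Real.rpow_natCast]

lemma lint_ofReal_sq_eq {α : Type*} [MeasurableSpace α] (m : Measure α) (v : α → ℝ) :
    ∫⁻ x, (ENNReal.ofReal |v x|) ^ (2:ℝ) ∂m = ∫⁻ x, ENNReal.ofReal (|v x| ^ 2) ∂m := by
  refine lintegral_congr fun x => ?_
  rw [ENNReal.ofReal_rpow_of_nonneg (abs_nonneg _) (by norm_num : (0:ℝ) ≤ 2)]
  congr 1
  rw [show ((2:ℝ)) = ((2:ℕ) : ℝ) by norm_num, Real.rpow_natCast]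

end Helpers


/-- If `f, g ∈ L²(X,m)` and there is a sequence `f_n ∈ Lip_bs(X)` with `f_n → f` in `L²`
and `lip(f_n) → g` weakly in `L²`, then `f² ∈ BV(X,d,m)` and `|D(f²)|(X) ≤ 2 ∫ |f| g dm`. -/
theorem sq_memBV_of_weak_gradient {X : Type*} [MetricSpace X] [CompleteSpace X]
    [TopologicalSpace.SeparableSpace X] [MeasurableSpace X] [BorelSpace X]
    (m : Measure X)
    (hbdd : ∀ s : Set X, Bornology.IsBounded s → m s < ⊤)
    (f g : X → ℝ) (hf : MemLp f 2 m) (hg : MemLp g 2 m)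
    (fn : ℕ → X → ℝ) (hfn : ∀ n, LipBS (fn n))
    (hL2 : Tendsto (fun n => ∫⁻ x, ENNReal.ofReal (|fn n x - f x| ^ 2) ∂m) atTop (𝓝 0))
    (hweak : ∀ φ : X → ℝ, MemLp φ 2 m →
      Tendsto (fun n => ∫ x, lipSlope (fn n) x * φ x ∂m) atTop
        (𝓝 (∫ x, g x * φ x ∂m))) :
    MemBV m (fun x => (f x) ^ 2) ∧
      totalVar m (fun x => (f x) ^ 2) ≤ ENNReal.ofReal (2 * ∫ x, |f x| * g x ∂m) := by
  classical
  set l : ℕ → X → ℝ := fun n => lipSlope (fn n) with hl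
  have hKn : ∀ n, ∃ K : NNReal, LipschitzWith K (fn n) := fun n => (hfn n).1
  choose K hK using hKn
  choose M hM0 hM using fun n => bounded_of_lipBS (hfn n)
  set S : ℕ → Set X := fun n => closure (Function.support (fn n)) with hS
  have hSb : ∀ n, Bornology.IsBounded (S n) := fun n => (hfn n).2.closure
  have hSm : ∀ n, MeasurableSet (S n) := fun n => isClosed_closure.measurableSet
  have hlmeas : ∀ n, Measurable (l n) := fun n => measurable_lipSlope (hK n)
  have hl0 : ∀ n x, 0 ≤ l n x := fun n x => lipSlope_nonneg _ x
  have hlK : ∀ n x, l n x ≤ K n := fun n x => lipSlope_le_lipschitz (hK n) x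
  have hl2 : ∀ n, MemLp (l n) 2 m := fun n =>
    memLp_two_of_bounded_support hbdd (hlmeas n).aestronglyMeasurable (K n).coe_nonneg
      (hSb n) (hSm n)
      (fun x => by rw [abs_of_nonneg (hl0 n x)]; exact hlK n x)
      (fun x hx => lipSlope_eq_zero_of_not_mem_closure hx)
  have hfnmeas : ∀ n, Measurable (fn n) := fun n => (hK n).continuous.measurable
  have hfn2 : ∀ n, MemLp (fn n) 2 m := fun n =>
    memLp_two_of_bounded_support hbdd (hfnmeas n).aestronglyMeasurable (hM0 n)
      (hSb n) (hSm n) (hM n)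
      (fun x hx => Function.notMem_support.1 fun hs => hx (subset_closure hs))
  -- the L² elements for the slopes
  set u : ℕ → Lp ℝ 2 m := fun n => (hl2 n).toLp (l n) with hu
  have hinner : ∀ n (φ : X → ℝ) (hφ : MemLp φ 2 m),
      (inner ℝ (u n) (hφ.toLp φ) : ℝ) = ∫ x, l n x * φ x ∂m := by
    intro n φ hφ
    rw [MeasureTheory.L2.inner_def]
    refine integral_congr_ae ?_
    filter_upwards [(hl2 n).coeFn_toLp, hφ.coeFn_toLp] with x h1 h2
    rw [h1, h2]
    simp [RCLike.inner_apply, starRingEnd_apply, mul_comm]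
  -- uniform bound via Banach–Steinhaus
  have hbound : ∃ C : ℝ, 0 ≤ C ∧ ∀ n, ‖u n‖ ≤ C := by
    have h1 : ∀ ψ : Lp ℝ 2 m, ∃ C : ℝ, ∀ n, ‖(innerSL ℝ (u n)) ψ‖ ≤ C := by
      intro ψ
      have hmem : MemLp (ψ : X → ℝ) 2 m := Lp.memLp ψ
      have heq : ∀ n, (innerSL ℝ (u n)) ψ = ∫ x, l n x * (ψ : X → ℝ) x ∂m := by
        intro n
        have h2 := hinner n (ψ : X → ℝ) hmem
        rw [Lp.toLp_coeFn ψ hmem] at h2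
        exact h2
      have ht := hweak (ψ : X → ℝ) hmem
      have ht2 : Tendsto (fun n => ‖(innerSL ℝ (u n)) ψ‖) atTop
          (𝓝 ‖∫ x, g x * (ψ : X → ℝ) x ∂m‖) := by
        simp_rw [heq]
        exact ht.norm
      obtain ⟨C, hC⟩ := ht2.bddAbove_range
      exact ⟨C, fun n => hC (Set.mem_range_self n)⟩
    obtain ⟨C, hC⟩ := banach_steinhaus h1
    refine ⟨max C 0, le_max_right _ _, fun n => ?_⟩
    rw [← innerSL_apply_norm (𝕜 := ℝ) (u n)]
    exact le_trans (hC n) (le_max_left _ _)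
  -- strong L² convergence
  have heLp : Tendsto (fun n => eLpNorm (fun x => fn n x - f x) 2 m) atTop (𝓝 0) := by
    have hrw : (fun n => eLpNorm (fun x => fn n x - f x) 2 m)
        = fun n => (∫⁻ x, ENNReal.ofReal (|fn n x - f x| ^ 2) ∂m) ^ (1/2 : ℝ) := by
      funext n
      exact eLpNorm_two_eq m _
    rw [hrw]
    have h0 : ((0:ℝ≥0∞) ^ (1/2 : ℝ)) = 0 := ENNReal.zero_rpow_of_pos (by norm_num)
    have := (ENNReal.continuous_rpow_const (y := (1/2:ℝ))).tendsto 0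
    rw [h0] at this
    exact this.comp hL2
  have hεfin : ∀ n, eLpNorm (fun x => fn n x - f x) 2 m ≠ ⊤ := fun n =>
    ((hfn2 n).sub hf).2.ne
  have heLpR : Tendsto (fun n => (eLpNorm (fun x => fn n x - f x) 2 m).toReal) atTop (𝓝 0) := by
    have h1 := (ENNReal.tendsto_toReal (a := 0) (by norm_num)).comp heLp
    simpa [Function.comp_def] using h1
  set ψ : ℕ → X → ℝ := fun n x => |fn n x| - |f x| with hψ
  have habsfn : ∀ n, MemLp (fun x => |fn n x|) 2 m := fun n => by
    have := (hfn2 n).norm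
    simpa [Real.norm_eq_abs] using this
  have habs : MemLp (fun x => |f x|) 2 m := by
    have := hf.norm
    simpa [Real.norm_eq_abs] using this
  have hψmem : ∀ n, MemLp (ψ n) 2 m := fun n => (habsfn n).sub habs
  have hψnorm : ∀ n, eLpNorm (ψ n) 2 m ≤ eLpNorm (fun x => fn n x - f x) 2 m := fun n =>
    eLpNorm_mono fun x => by
      simp only [Real.norm_eq_abs, hψ]
      exact abs_abs_sub_abs_le_abs_sub _ _
  have hB : Tendsto (fun n => ∫ x, l n x * ψ n x ∂m) atTop (𝓝 0) := by
    obtain ⟨C, hC0, hC⟩ := hbound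
    have hgt : Tendsto (fun n => C * (eLpNorm (fun x => fn n x - f x) 2 m).toReal)
        atTop (𝓝 0) := by simpa using heLpR.const_mul C
    refine squeeze_zero_norm (fun n => ?_) hgt
    · have h1 : ∫ x, l n x * ψ n x ∂m = (inner ℝ (u n) ((hψmem n).toLp (ψ n)) : ℝ) :=
        (hinner n (ψ n) (hψmem n)).symm
      rw [h1]
      calc ‖(inner ℝ (u n) ((hψmem n).toLp (ψ n)) : ℝ)‖
          ≤ ‖u n‖ * ‖(hψmem n).toLp (ψ n)‖ := norm_inner_le_norm _ _
        _ ≤ C * (eLpNorm (ψ n) 2 m).toReal := by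
            rw [Lp.norm_toLp (ψ n) (hψmem n)]
            exact mul_le_mul_of_nonneg_right (hC n) ENNReal.toReal_nonneg
        _ ≤ C * (eLpNorm (fun x => fn n x - f x) 2 m).toReal := by
            refine mul_le_mul_of_nonneg_left ?_ hC0
            exact ENNReal.toReal_mono (hεfin n) (hψnorm n)
  have hA : Tendsto (fun n => ∫ x, l n x * |f x| ∂m) atTop (𝓝 (∫ x, g x * |f x| ∂m)) :=
    hweak (fun x => |f x|) habs
  have hintA : ∀ n, Integrable (fun x => l n x * |f x|) m := fun n =>
    integrable_mul_of_memLp_two (hl2 n) habs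
  have hintB : ∀ n, Integrable (fun x => l n x * ψ n x) m := fun n =>
    integrable_mul_of_memLp_two (hl2 n) (hψmem n)
  have hconv : Tendsto (fun n => ∫ x, l n x * |fn n x| ∂m) atTop
      (𝓝 (∫ x, g x * |f x| ∂m)) := by
    have hsp : ∀ n, ∫ x, l n x * |fn n x| ∂m
        = (∫ x, l n x * |f x| ∂m) + ∫ x, l n x * ψ n x ∂m := by
      intro n
      rw [← integral_add (hintA n) (hintB n)]
      refine integral_congr_ae (Filter.Eventually.of_forall fun x => ?_)
      simp only [hψ]
      ring
    simp_rw [hsp]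
    simpa using hA.add hB
  set I : ℕ → ℝ := fun n => ∫ x, 2 * |fn n x| * l n x ∂m with hI
  have hIrw : ∀ n, I n = 2 * ∫ x, l n x * |fn n x| ∂m := by
    intro n
    simp only [hI]
    rw [← integral_const_mul]
    refine integral_congr_ae (Filter.Eventually.of_forall fun x => ?_)
    ring
  have hIconv : Tendsto I atTop (𝓝 (2 * ∫ x, g x * |f x| ∂m)) := by
    have : I = fun n => 2 * ∫ x, l n x * |fn n x| ∂m := funext hIrw
    rw [this]
    exact hconv.const_mul 2
  have hintI : ∀ n, Integrable (fun x => 2 * |fn n x| * l n x) m := fun n => by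
    have h1 := integrable_mul_of_memLp_two (habsfn n) (hl2 n)
    have h2 := h1.const_mul 2
    refine h2.congr (Filter.Eventually.of_forall fun x => ?_)
    ring
  set P : ℕ → ℝ≥0∞ := fun n => ∫⁻ x, ENNReal.ofReal (lipSlope (fun y => fn n y ^ 2) x) ∂m
    with hPdef
  have hP_le : ∀ n, P n ≤ ENNReal.ofReal (I n) := by
    intro n
    calc P n
        ≤ ∫⁻ x, ENNReal.ofReal (2 * |fn n x| * l n x) ∂m := by
          refine lintegral_mono fun x => ENNReal.ofReal_le_ofReal ?_
          exact lipSlope_sq_le (hK n) x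
      _ = ENNReal.ofReal (I n) := by
          simp only [hI]
          rw [← ofReal_integral_eq_lintegral_ofReal (hintI n)
            (Filter.Eventually.of_forall fun x =>
              mul_nonneg (by positivity) (hl0 n x))]
  have hPlim : Tendsto (fun n => ENNReal.ofReal (I n)) atTop
      (𝓝 (ENNReal.ofReal (2 * ∫ x, g x * |f x| ∂m))) :=
    (ENNReal.continuous_ofReal.tendsto _).comp hIconv
  -- L¹ convergence of fn² to f²
  have hJ : Tendsto (fun n => ∫⁻ x, ENNReal.ofReal |fn n x ^ 2 - f x ^ 2| ∂m) atTop (𝓝 0) := by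
    set Cf := (∫⁻ x, ENNReal.ofReal (|f x| ^ 2) ∂m) ^ (1/2 : ℝ) with hCf
    have hCf_eq : Cf = eLpNorm f 2 m := (eLpNorm_two_eq m f).symm
    have hCf_ne : Cf ≠ ⊤ := by rw [hCf_eq]; exact hf.2.ne
    have haef : AEMeasurable (fun x => ENNReal.ofReal |f x|) m :=
      ENNReal.measurable_ofReal.comp_aemeasurable
        (continuous_abs.measurable.comp_aemeasurable hf.1.aemeasurable)
    have haed : ∀ n, AEMeasurable (fun x => ENNReal.ofReal |fn n x - f x|) m := fun n =>
      ENNReal.measurable_ofReal.comp_aemeasurable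
        (continuous_abs.measurable.comp_aemeasurable
          ((hfnmeas n).aemeasurable.sub hf.1.aemeasurable))
    have haed2 : ∀ n, AEMeasurable (fun x => ENNReal.ofReal (|fn n x - f x| ^ 2)) m := fun n =>
      ENNReal.measurable_ofReal.comp_aemeasurable
        (((continuous_abs.measurable.pow_const 2)).comp_aemeasurable
          ((hfnmeas n).aemeasurable.sub hf.1.aemeasurable))
    have hbd : ∀ n, (∫⁻ x, ENNReal.ofReal |fn n x ^ 2 - f x ^ 2| ∂m)
        ≤ (∫⁻ x, ENNReal.ofReal (|fn n x - f x| ^ 2) ∂m)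
          + 2 * (Cf * ((∫⁻ x, ENNReal.ofReal (|fn n x - f x| ^ 2) ∂m) ^ (1/2 : ℝ))) := by
      intro n
      have hpt : ∀ x, ENNReal.ofReal |fn n x ^ 2 - f x ^ 2|
          ≤ ENNReal.ofReal (|fn n x - f x| ^ 2)
            + ENNReal.ofReal (2 * (|f x| * |fn n x - f x|)) := by
        intro x
        have h1 : |fn n x ^ 2 - f x ^ 2|
            ≤ |fn n x - f x| ^ 2 + 2 * (|f x| * |fn n x - f x|) := by
          have e1 : |fn n x ^ 2 - f x ^ 2| = |fn n x + f x| * |fn n x - f x| := by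
            rw [← abs_mul]
            ring_nf
          have e2 : |fn n x + f x| ≤ |fn n x - f x| + 2 * |f x| := by
            calc |fn n x + f x| = |(fn n x - f x) + 2 * f x| := by ring_nf
              _ ≤ |fn n x - f x| + |2 * f x| := abs_add_le _ _
              _ = |fn n x - f x| + 2 * |f x| := by rw [abs_mul, abs_two]
          calc |fn n x ^ 2 - f x ^ 2| = |fn n x + f x| * |fn n x - f x| := e1
            _ ≤ (|fn n x - f x| + 2 * |f x|) * |fn n x - f x| :=
                mul_le_mul_of_nonneg_right e2 (abs_nonneg _)
            _ = |fn n x - f x| ^ 2 + 2 * (|f x| * |fn n x - f x|) := by ring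
        calc ENNReal.ofReal |fn n x ^ 2 - f x ^ 2|
            ≤ ENNReal.ofReal (|fn n x - f x| ^ 2 + 2 * (|f x| * |fn n x - f x|)) :=
              ENNReal.ofReal_le_ofReal h1
          _ ≤ _ := ENNReal.ofReal_add_le
      have hstep1 : (∫⁻ x, ENNReal.ofReal |fn n x ^ 2 - f x ^ 2| ∂m)
          ≤ (∫⁻ x, ENNReal.ofReal (|fn n x - f x| ^ 2) ∂m)
            + ∫⁻ x, ENNReal.ofReal (2 * (|f x| * |fn n x - f x|)) ∂m := by
        refine le_trans (lintegral_mono hpt) ?_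
        rw [lintegral_add_left' (haed2 n)]
      refine le_trans hstep1 (add_le_add_right ?_ _)
      have hsplit : ∀ x, ENNReal.ofReal (2 * (|f x| * |fn n x - f x|))
          = 2 * (ENNReal.ofReal |f x| * ENNReal.ofReal |fn n x - f x|) := by
        intro x
        rw [ENNReal.ofReal_mul (by norm_num : (0:ℝ) ≤ 2),
          ENNReal.ofReal_mul (abs_nonneg _)]
        norm_num
      have hrw2 : (∫⁻ x, ENNReal.ofReal (2 * (|f x| * |fn n x - f x|)) ∂m)
          = 2 * ∫⁻ x, ENNReal.ofReal |f x| * ENNReal.ofReal |fn n x - f x| ∂m := by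
        rw [show (fun x => ENNReal.ofReal (2 * (|f x| * |fn n x - f x|)))
            = fun x => 2 * (ENNReal.ofReal |f x| * ENNReal.ofReal |fn n x - f x|)
            from funext hsplit]
        exact lintegral_const_mul' 2 _ (by norm_num)
      rw [hrw2]
      refine mul_le_mul_right ?_ 2
      have hhold := ENNReal.lintegral_mul_le_Lp_mul_Lq m
        ((by constructor <;> norm_num : Real.HolderConjugate 2 2)) haef (haed n)
      refine le_trans hhold ?_
      rw [lint_ofReal_sq_eq, lint_ofReal_sq_eq]
    have hb2 : Tendsto (fun n =>
        (∫⁻ x, ENNReal.ofReal (|fn n x - f x| ^ 2) ∂m)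
          + 2 * (Cf * ((∫⁻ x, ENNReal.ofReal (|fn n x - f x| ^ 2) ∂m) ^ (1/2 : ℝ))))
        atTop (𝓝 0) := by
      have h1 : Tendsto (fun n =>
          ((∫⁻ x, ENNReal.ofReal (|fn n x - f x| ^ 2) ∂m) ^ (1/2 : ℝ))) atTop (𝓝 0) := by
        have h0 : ((0:ℝ≥0∞) ^ (1/2 : ℝ)) = 0 := ENNReal.zero_rpow_of_pos (by norm_num)
        have := (ENNReal.continuous_rpow_const (y := (1/2:ℝ))).tendsto 0
        rw [h0] at this
        exact this.comp hL2
      have h2 : Tendsto (fun n =>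
          2 * (Cf * ((∫⁻ x, ENNReal.ofReal (|fn n x - f x| ^ 2) ∂m) ^ (1/2 : ℝ))))
          atTop (𝓝 0) := by
        have h3 := ENNReal.Tendsto.const_mul h1 (Or.inr hCf_ne)
        rw [mul_zero] at h3
        have h4 := ENNReal.Tendsto.const_mul h3 (Or.inr (by norm_num : (2:ℝ≥0∞) ≠ ⊤))
        rw [mul_zero] at h4
        exact h4
      have := hL2.add h2
      rw [add_zero] at this
      exact this
    exact tendsto_of_tendsto_of_tendsto_of_le_of_le tendsto_const_nhds hb2
      (fun n => zero_le) hbd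
  -- LipLoc for the squares
  have hLipLoc : ∀ n, LipLoc (fun x => fn n x ^ 2) := by
    intro n s _
    refine ⟨2 * (M n).toNNReal * K n, LipschitzWith.lipschitzOnWith ?_⟩
    refine LipschitzWith.of_dist_le_mul fun x y => ?_
    have hcoe : ((2 * (M n).toNNReal * K n : NNReal) : ℝ) = 2 * M n * K n := by
      push_cast
      rw [Real.coe_toNNReal _ (hM0 n)]
    rw [Real.dist_eq, hcoe]
    have e1 : |fn n x ^ 2 - fn n y ^ 2| = |fn n x + fn n y| * |fn n x - fn n y| := by
      rw [← abs_mul]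
      ring_nf
    rw [e1]
    have e2 : |fn n x + fn n y| ≤ 2 * M n := by
      calc |fn n x + fn n y| ≤ |fn n x| + |fn n y| := abs_add_le _ _
        _ ≤ M n + M n := add_le_add (hM n x) (hM n y)
        _ = 2 * M n := by ring
    have e3 : |fn n x - fn n y| ≤ K n * dist x y := by
      simpa [Real.dist_eq] using (hK n).dist_le_mul x y
    calc |fn n x + fn n y| * |fn n x - fn n y| ≤ (2 * M n) * (K n * dist x y) :=
        mul_le_mul e2 e3 (abs_nonneg _) (by linarith [hM0 n])
      _ = 2 * M n * K n * dist x y := by ring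
  -- conclusion
  have hcomm : (∫ x, g x * |f x| ∂m) = ∫ x, |f x| * g x ∂m :=
    integral_congr_ae (Filter.Eventually.of_forall fun x => mul_comm _ _)
  have hlimsupP : Filter.limsup P atTop ≤ ENNReal.ofReal (2 * ∫ x, |f x| * g x ∂m) := by
    refine le_trans (Filter.limsup_le_limsup (Filter.Eventually.of_forall hP_le)) ?_
    rw [hPlim.limsup_eq, hcomm]
  have hliminfP : Filter.liminf P atTop ≤ ENNReal.ofReal (2 * ∫ x, |f x| * g x ∂m) := by
    refine le_trans (Filter.liminf_le_liminf (Filter.Eventually.of_forall hP_le)) ?_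
    rw [hPlim.liminf_eq, hcomm]
  constructor
  · refine ⟨hf.integrable_sq, fun n x => fn n x ^ 2, hLipLoc, hJ, ?_⟩
    exact lt_of_le_of_lt hlimsupP ENNReal.ofReal_lt_top
  · refine le_trans (sInf_le ⟨fun n x => fn n x ^ 2, hLipLoc, hJ, rfl⟩) hliminfP
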